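/- For every m ≥ 2, if an m-testable semigroup identity u ≈ v (one satisfied by all m-testable semigroups, i.e., u and v share the same prefix of length m−1, the same suffix of length m−1, and the same set of factors of length m) has left side u = w_{m,r} = x^{m−1} t₁ x^{m−1} ⋯ t_r x^{m−1} and right side v of the form x^{e₀} t₁ x^{e₁} ⋯ t_r x^{e_r}, then v = u. -/

import Mathlib

abbrev Word := List ℕ

def subst (φ : ℕ → Word) (w : Word) : Word := w.flatMap φ

inductive Deduce (S : Set (Word × Word)) : Word → Word → Prop
  | refl (w : Word) : Deduce S w w
  | symm {u v : Word} : Deduce S u v → Deduce S v u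
  | trans {u v w : Word} : Deduce S u v → Deduce S v w → Deduce S u w
  | step (a b : Word) (φ : ℕ → Word) {s t : Word} (h : (s, t) ∈ S) :
      Deduce S (a ++ subst φ s ++ b) (a ++ subst φ t ++ b)

def FM (w : Word) : Type := Option {u : Word // u <:+: w}

def fmul {w : Word} : FM w → FM w → FM w
  | some u, some v =>
      if h : (u.1 ++ v.1) <:+: w then some ⟨u.1 ++ v.1, h⟩ else none
  | _, _ => none

def fone (w : Word) : FM w := some ⟨[], List.nil_infix⟩

theorem fmul_none_left {w : Word} (a : FM w) : fmul none a = none := rfl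

theorem fmul_none_right {w : Word} (a : FM w) : fmul a none = none := by
  rcases a with _ | u <;> rfl

theorem fmul_some {w : Word} (u v : {u : Word // u <:+: w}) :
    fmul (some u) (some v) =
      if h : (u.1 ++ v.1) <:+: w then some ⟨u.1 ++ v.1, h⟩ else none := rfl

theorem fmul_assoc {w : Word} (a b c : FM w) : fmul (fmul a b) c = fmul a (fmul b c) := by
  rcases a with _ | u
  · rfl
  rcases b with _ | v
  · rfl
  rcases c with _ | t
  · simp only [fmul_some]; split_ifs <;> rfl
  rw [fmul_some, fmul_some]
  by_cases h : (u.1 ++ v.1 ++ t.1) <:+: w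
  · have h1 : (u.1 ++ v.1) <:+: w := List.IsInfix.trans ⟨[], t.1, by simp⟩ h
    have h2 : (v.1 ++ t.1) <:+: w := List.IsInfix.trans ⟨u.1, [], by simp⟩ h
    rw [dif_pos h1, fmul_some, dif_pos h2, fmul_some, dif_pos h,
      dif_pos (show (u.1 ++ (v.1 ++ t.1)) <:+: w by simpa [List.append_assoc] using h)]
    simp [List.append_assoc]
    try rfl
  · by_cases h1 : (u.1 ++ v.1) <:+: w
    · rw [dif_pos h1, fmul_some, dif_neg h]
      by_cases h2 : (v.1 ++ t.1) <:+: w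
      · rw [dif_pos h2, fmul_some,
          dif_neg (fun hh => h (by simpa [List.append_assoc] using hh))]
      · rw [dif_neg h2]
        try rfl
    · rw [dif_neg h1]
      by_cases h2 : (v.1 ++ t.1) <:+: w
      · rw [dif_pos h2, fmul_some,
          dif_neg (fun hh => h1 (List.IsInfix.trans ⟨[], t.1, by simp⟩ hh))]
        try rfl
      · rw [dif_neg h2]
        try rfl

instance (w : Word) : Monoid (FM w) where
  mul := fmul
  one := fone w
  mul_assoc := fmul_assoc
  one_mul := by
    rintro (_ | u)
    · rfl
    · show fmul (fone w) (some u) = some u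
      rw [fone, fmul_some, dif_pos (by simpa using u.2)]
      simp
      try rfl
  mul_one := by
    rintro (_ | u)
    · rfl
    · show fmul (some u) (fone w) = some u
      rw [fone, fmul_some, dif_pos (by simpa using u.2)]
      simp
      try rfl

def SatId (M : Type) [Monoid M] (p : Word × Word) : Prop :=
  ∀ φ : ℕ → M, (p.1.map φ).prod = (p.2.map φ).prod

def VSat (E : Set (Word × Word)) (p : Word × Word) : Prop :=
  ∀ (M : Type) [Monoid M], (∀ q ∈ E, SatId M q) → SatId M p

def ids0 : Set (Word × Word) :=
  {([0,1,2,0,3,1],[1,0,2,0,3,1]), ([0,2,0,1,3,1],[0,2,1,0,3,1]), ([0,2,1,3,0,1],[0,2,1,3,1,0])}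

def idA (n : ℕ) : Word × Word :=
  (List.replicate n 0 ++ (List.range n).map (· + 1),
   ((List.range n).map (fun i => [i + 1, 0])).flatten)

def rigid (e₀ : ℕ) (es : List ℕ) : Word :=
  List.replicate e₀ 0 ++ ((es.zipIdx.map Prod.swap).map (fun p => (p.1 + 1) :: List.replicate p.2 0)).flatten

def Bword (n i : ℕ) : Word := List.replicate i 0 ++ 1 :: List.replicate (n - 1 - i) 0

def wmr (m r : ℕ) : Word := rigid (m - 1) (List.replicate r (m - 1))

section Aux

/-- Splitting an infix around an excluded middle element. -/
lemma infix_append_cons_of_not_mem {α : Type*} {z a b : List α} {c : α}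
    (h : z <:+: a ++ c :: b) (hc : c ∉ z) : z <:+: a ∨ z <:+: b := by
  obtain ⟨s, t, hst⟩ := h
  rcases le_or_gt (s.length + z.length) a.length with h1 | h1
  · left
    obtain ⟨k, hk⟩ : ∃ k, a.length = s.length + (z.length + k) :=
      ⟨a.length - s.length - z.length, by omega⟩
    have h2 : List.take a.length (s ++ z ++ t) = a := by
      rw [hst]; exact List.take_left' rfl
    rw [hk, List.append_assoc, List.take_append, List.take_append,
      ← List.append_assoc] at h2
    exact ⟨s, t.take k, by simpa [List.take_of_length_le] using h2⟩
  rcases le_or_gt (a.length + 1) s.length with h2 | h2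
  · right
    have h3 : List.drop (a.length + 1) (s ++ (z ++ t)) =
        List.drop (a.length + 1) (a ++ c :: b) := by
      rw [← List.append_assoc, hst]
    rw [List.drop_append,
      show a.length + 1 - s.length = 0 from by omega, List.drop_zero] at h3
    rw [List.drop_append,
      show a.length + 1 - a.length = 1 from by omega,
      List.drop_eq_nil_of_le (Nat.le_succ _), List.nil_append,
      List.drop_one, List.tail_cons] at h3
    exact ⟨s.drop (a.length + 1), t, by rw [List.append_assoc]; exact h3⟩
  · exfalso
    apply hc
    have hlt : a.length - s.length < z.length := by omega
    have hW : a.length < (a ++ c :: b).length := by simp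
    have w := List.getElem_of_eq hst.symm hW
    rw [List.getElem_append_right (le_refl a.length)] at w
    simp only [Nat.sub_self, List.getElem_cons_zero] at w
    rw [List.getElem_append_left (show a.length < (s ++ z).length by simp; omega),
      List.getElem_append_right (show s.length ≤ a.length by omega)] at w
    exact w ▸ List.getElem_mem _

/-- An infix starting with a letter not occurring in `a` lies in `b`. -/
lemma cons_infix_append_right {α : Type*} {c : α} {zs a b : List α}
    (h : (c :: zs) <:+: a ++ b) (hc : c ∉ a) : (c :: zs) <:+: b := by
  obtain ⟨s, t, hst⟩ := h
  rcases lt_or_ge s.length a.length with h1 | h1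
  · exfalso
    apply hc
    have hW : s.length < (a ++ b).length := by simp; omega
    have w := List.getElem_of_eq hst.symm hW
    rw [List.getElem_append_left h1,
      List.getElem_append_left (show s.length < (s ++ c :: zs).length by simp),
      List.getElem_append_right (le_refl s.length)] at w
    simp only [Nat.sub_self, List.getElem_cons_zero] at w
    exact w ▸ List.getElem_mem h1
  · have h3 : List.drop a.length (s ++ (c :: zs ++ t)) = b := by
      rw [← List.append_assoc, hst, List.drop_left]
    rw [List.drop_append,
      show a.length - s.length = 0 from by omega, List.drop_zero] at h3
    exact ⟨s.drop a.length, t, by rw [List.append_assoc]; exact h3⟩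

def rigidAux : ℕ → List ℕ → Word
  | _, [] => []
  | k, e :: es => (k + 1) :: (List.replicate e 0 ++ rigidAux (k + 1) es)

lemma rigidAux_eq (k : ℕ) (es : List ℕ) :
    (((es.zipIdx k).map Prod.swap).map (fun p => (p.1 + 1) :: List.replicate p.2 0)).flatten = rigidAux k es := by
  induction es generalizing k with
  | nil => rfl
  | cons e es ih => simp only [List.zipIdx_cons, List.map_cons, List.flatten_cons, List.cons_append, rigidAux, ih, Prod.swap]

lemma rigid_eq (e₀ : ℕ) (es : List ℕ) :
    rigid e₀ es = List.replicate e₀ 0 ++ rigidAux 0 es := by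
  rw [rigid, ← rigidAux_eq 0]

lemma zero_run_bound : ∀ (es : List ℕ) (k e₀ n : ℕ),
    List.replicate n 0 <:+: List.replicate e₀ 0 ++ rigidAux k es →
    n ≤ e₀ ∨ ∃ x ∈ es, n ≤ x := by
  intro es
  induction es with
  | nil =>
    intro k e₀ n h
    rw [rigidAux, List.append_nil] at h
    left
    simpa using h.length_le
  | cons x es ih =>
    intro k e₀ n h
    rw [rigidAux] at h
    rcases infix_append_cons_of_not_mem h (by simp) with h | h
    · left; simpa using h.length_le
    · rcases ih (k + 1) x n h with h | ⟨y, hy, hn⟩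
      · exact Or.inr ⟨x, by simp, h⟩
      · exact Or.inr ⟨y, by simp [hy], hn⟩

lemma letter_factor : ∀ (es : List ℕ) (k e₀ c n : ℕ), c ≠ 0 →
    (c :: List.replicate n 0) <:+: List.replicate e₀ 0 ++ rigidAux k es →
    ∃ i, ∃ hi : i < es.length, c = k + i + 1 ∧ n ≤ es[i] := by
  intro es
  induction es with
  | nil =>
    intro k e₀ c n hc h
    rw [rigidAux, List.append_nil] at h
    exact absurd (List.eq_of_mem_replicate (h.subset List.mem_cons_self)) hc
  | cons x es ih =>
    intro k e₀ c n hc h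
    rw [rigidAux] at h
    have h2 := cons_infix_append_right h (by simp [List.mem_replicate, hc])
    rcases List.infix_cons_iff.1 h2 with h3 | h3
    · obtain ⟨t, ht⟩ := h3
      rw [List.cons_append] at ht
      have hck : c = k + 1 := (List.cons.injEq _ _ _ _ ▸ ht).1
      have he : List.replicate n 0 ++ t = List.replicate x 0 ++ rigidAux (k + 1) es :=
        (List.cons.injEq _ _ _ _ ▸ ht).2
      have hnx : n ≤ x := by
        by_contra hn
        push_neg at hn
        cases es with
        | nil =>
          have := congrArg List.length he
          simp [rigidAux] at this
          omega
        | cons y es' =>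
          have hlen : x < (List.replicate n 0 ++ t).length := by simp; omega
          have e1 : (List.replicate n 0 ++ t)[x]'hlen = 0 := by
            rw [List.getElem_append_left (by simpa using hn)]
            simp
          have e2 : (List.replicate n 0 ++ t)[x]'hlen = k + 2 := by
            rw [List.getElem_of_eq he, List.getElem_append_right (by simp)]
            simp [rigidAux]
          rw [e1] at e2
          exact absurd e2.symm (by omega)
      exact ⟨0, by simp, by simpa using hck, by simpa using hnx⟩
    · obtain ⟨i, hi, hci, hni⟩ := ih (k + 1) x c n hc h3
      exact ⟨i + 1, by simpa using hi, by omega, by simpa using hni⟩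

lemma factor_of_rigidAux : ∀ (es : List ℕ) (k i : ℕ) (hi : i < es.length),
    ((k + i + 1) :: List.replicate es[i] 0) <:+: rigidAux k es := by
  intro es
  induction es with
  | nil => intro k i hi; simp at hi
  | cons x es ih =>
    intro k i hi
    cases i with
    | zero => exact ⟨[], rigidAux (k + 1) es, by simp [rigidAux]⟩
    | succ i =>
      have h := ih (k + 1) i (by simpa using hi)
      have h2 : rigidAux (k + 1) es <:+: rigidAux k (x :: es) :=
        ⟨(k + 1) :: List.replicate x 0, [], by simp [rigidAux]⟩
      have h3 := h.trans h2
      have e1 : k + 1 + i + 1 = k + (i + 1) + 1 := by omega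
      rw [e1] at h3
      simpa using h3

lemma factor_of_rigid (e₀ : ℕ) (es : List ℕ) (i : ℕ) (hi : i < es.length) :
    ((i + 1) :: List.replicate es[i] 0) <:+: rigid e₀ es := by
  have h := factor_of_rigidAux es 0 i hi
  rw [rigid_eq]
  have h2 : rigidAux 0 es <:+: List.replicate e₀ 0 ++ rigidAux 0 es :=
    (List.suffix_append _ _).isInfix
  exact (by simpa using h : ((i + 1) :: List.replicate es[i] 0) <:+: rigidAux 0 es).trans h2

lemma zrun_of_rigid (e₀ : ℕ) (es : List ℕ) (i : ℕ) (hi : i < es.length) (n : ℕ)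
    (hn : n ≤ es[i]) : List.replicate n 0 <:+: rigid e₀ es := by
  refine List.IsInfix.trans ?_ (factor_of_rigid e₀ es i hi)
  refine ⟨[i + 1], List.replicate (es[i] - n) 0, ?_⟩
  have e1 : n + (es[i] - n) = es[i] := by omega
  simp [List.append_assoc, ← List.replicate_add, e1]

end Aux

/-- For `m ≥ 2`, if a word `v = x^{e₀} t₁ x^{e₁} ⋯ t_r x^{e_r}` has the
same length-`(m-1)` prefix, the same length-`(m-1)` suffix, and the same set of
length-`m` factors as `u = w_{m,r} = x^{m-1} t₁ x^{m-1} ⋯ t_r x^{m-1}`, then `v = u`. -/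
theorem stmt15 (m r : ℕ) (hm : 2 ≤ m) (hr : 1 ≤ r) (e₀ : ℕ) (es : List ℕ)
    (hlen : es.length = r)
    (hpre : (rigid e₀ es).take (m - 1) = (wmr m r).take (m - 1))
    (hsuf : (rigid e₀ es).reverse.take (m - 1) = (wmr m r).reverse.take (m - 1))
    (hfac : ∀ f : Word, f.length = m → ((f <:+: rigid e₀ es) ↔ (f <:+: wmr m r))) :
    rigid e₀ es = wmr m r := by
  have hw : wmr m r = List.replicate (m - 1) 0 ++ rigidAux 0 (List.replicate r (m - 1)) :=
    rigid_eq _ _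
  have hnoz : ¬ (List.replicate m 0 <:+: wmr m r) := by
    intro h
    rw [hw] at h
    rcases zero_run_bound _ 0 (m - 1) m h with h | ⟨x, hx, h⟩
    · omega
    · rw [List.eq_of_mem_replicate hx] at h; omega
  -- e₀ ≥ m - 1
  have he0_ge : m - 1 ≤ e₀ := by
    by_contra hlt
    push_neg at hlt
    have hwpre : (wmr m r).take (m - 1) = List.replicate (m - 1) 0 := by
      rw [hw, List.take_left' (by simp)]
    rw [hwpre, rigid_eq] at hpre
    obtain ⟨x, es', rfl⟩ : ∃ x es', es = x :: es' := by
      cases es with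
      | nil => simp at hlen; omega
      | cons x es' => exact ⟨x, es', rfl⟩
    have hb : e₀ < ((List.replicate e₀ 0 ++ rigidAux 0 (x :: es')).take (m - 1)).length := by
      simp [rigidAux]
      omega
    have e1 : ((List.replicate e₀ 0 ++ rigidAux 0 (x :: es')).take (m - 1))[e₀]'hb = 1 := by
      rw [List.getElem_take, List.getElem_append_right (by simp)]
      simp [rigidAux]
    rw [List.getElem_of_eq hpre] at e1
    simp at e1
  -- e₀ ≤ m - 1
  have he0_le : e₀ ≤ m - 1 := by
    by_contra hlt
    push_neg at hlt
    apply hnoz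
    refine (hfac _ (by simp)).1 ?_
    rw [rigid_eq]
    refine List.IsPrefix.isInfix ⟨List.replicate (e₀ - m) 0 ++ rigidAux 0 es, ?_⟩
    have e1 : m + (e₀ - m) = e₀ := by omega
    rw [← List.append_assoc, ← List.replicate_add, e1]
  -- each entry equals m - 1
  have hentry : ∀ i (hi : i < es.length), es[i] = m - 1 := by
    intro i hi
    have hge : m - 1 ≤ es[i] := by
      have hfw : ((i + 1) :: List.replicate (m - 1) 0) <:+: wmr m r := by
        have h := factor_of_rigid (m - 1) (List.replicate r (m - 1)) i (by simpa [hlen] using hi)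
        simpa [wmr] using h
      have h2 := (hfac _ (by simp; omega)).2 hfw
      rw [rigid_eq] at h2
      obtain ⟨j, hj, hcj, hnj⟩ := letter_factor es 0 e₀ (i + 1) (m - 1) (by omega) h2
      have : j = i := by omega
      subst this
      exact hnj
    have hle : es[i] ≤ m - 1 := by
      by_contra hlt
      push_neg at hlt
      exact hnoz ((hfac _ (by simp)).1 (zrun_of_rigid e₀ es i hi m (by omega)))
    omega
  have hes : es = List.replicate r (m - 1) := by
    rw [List.eq_replicate_iff]
    refine ⟨hlen, fun b hb => ?_⟩
    obtain ⟨i, hi, rfl⟩ := List.mem_iff_getElem.1 hb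
    exact hentry i hi
  rw [show e₀ = m - 1 by omega, hes]
  rfl
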